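/- Let G be a vertex-colored graph and G' the graph on V(G) where two vertices are adjacent iff they are weakly color-avoiding connected in G. Then G' contains no induced wheel on at least five vertices; equivalently, G' is locally chordal. -/

import Mathlib

/-- `u` and `v` are weakly `i`-avoiding connected. -/
def WeaklyAvoids {V C : Type} (G : SimpleGraph V) (c : V → C) (i : C) (u v : V) : Prop :=
  c u = i ∨ c v = i ∨ ∃ p : G.Walk u v, ∀ x ∈ p.support, c x ≠ i

/-- `u` and `v` are weakly color-avoiding connected: they are in the same component
and weakly `i`-avoiding connected for every color `i`. -/
def WeaklyCAConnected {V C : Type} (G : SimpleGraph V) (c : V → C) (u v : V) : Prop :=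
  G.Reachable u v ∧ ∀ i : C, WeaklyAvoids G c i u v

/-- The derived graph `G'`: adjacency is weak color-avoiding connectivity. -/
def weakGraph {V C : Type} (G : SimpleGraph V) (c : V → C) : SimpleGraph V where
  Adj u v := u ≠ v ∧ WeaklyCAConnected G c u v
  symm := by
    constructor
    rintro u v ⟨h, hr, hw⟩
    refine ⟨h.symm, hr.symm, fun i => ?_⟩
    rcases hw i with h1 | h1 | ⟨p, hp⟩
    · exact Or.inr (Or.inl h1)
    · exact Or.inl h1
    · exact Or.inr (Or.inr ⟨p.reverse, fun x hx => hp x (by simpa using hx)⟩)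
  loopless := by
    constructor
    rintro u ⟨h, -⟩
    exact h rfl

/-- The set `s` carries an induced cycle of length at least 4 in `G`. -/
def HasInducedLongCycleOn {V : Type} (G : SimpleGraph V) (s : Set V) : Prop :=
  ∃ n : ℕ, 4 ≤ n ∧ ∃ w : ZMod n → V, Function.Injective w ∧
    (∀ j, w j ∈ s) ∧
    (∀ j, G.Adj (w j) (w (j + 1))) ∧
    (∀ j k, k ≠ j → k ≠ j + 1 → k + 1 ≠ j → ¬ G.Adj (w j) (w k))

/-- `G` is locally chordal. -/
def LocallyChordal {V : Type} (G : SimpleGraph V) : Prop :=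
  ∀ u : V, ¬ HasInducedLongCycleOn G (G.neighborSet u)

/-- `G` contains an induced wheel on at least five vertices. -/
def HasInducedWheel {V : Type} (G : SimpleGraph V) : Prop :=
  ∃ l : ℕ, 4 ≤ l ∧ ∃ (u : V) (w : ZMod l → V), Function.Injective w ∧
    (∀ j, w j ≠ u) ∧
    (∀ j, G.Adj u (w j)) ∧
    (∀ j, G.Adj (w j) (w (j + 1))) ∧
    (∀ j k, k ≠ j → k ≠ j + 1 → k + 1 ≠ j → ¬ G.Adj (w j) (w k))


private lemma zne {n a b : ℕ} (ha : a < n) (hb : b < n) (h : a ≠ b) :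
    (a : ZMod n) ≠ (b : ZMod n) := by
  intro he
  rw [ZMod.natCast_eq_natCast_iff] at he
  exact h (by simpa [Nat.ModEq, Nat.mod_eq_of_lt ha, Nat.mod_eq_of_lt hb] using he)

private lemma no_wheel_core {V C : Type} (G : SimpleGraph V) (c : V → C) (u : V)
    {n : ℕ} (hn : 4 ≤ n) (w : ZMod n → V) (hinj : Function.Injective w)
    (hadj : ∀ j, (weakGraph G c).Adj u (w j))
    (hcyc : ∀ j, (weakGraph G c).Adj (w j) (w (j + 1)))
    (hind : ∀ j k, k ≠ j → k ≠ j + 1 → k + 1 ≠ j → ¬ (weakGraph G c).Adj (w j) (w k)) :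
    False := by
  -- key: for every non-consecutive pair, the blocking color must be `c u`
  have key : ∀ j k, k ≠ j → k ≠ j + 1 → k + 1 ≠ j →
      c (w j) ≠ c u ∧ c (w k) ≠ c u ∧
      ∀ p : G.Walk (w j) (w k), ∃ x ∈ p.support, c x = c u := by
    intro j k h1 h2 h3
    have hne : w j ≠ w k := fun h => h1 (hinj h).symm
    have hreach : G.Reachable (w j) (w k) := ((hadj j).2.1.symm).trans (hadj k).2.1
    have hnadj : ¬ (w j ≠ w k ∧ WeaklyCAConnected G c (w j) (w k)) := hind j k h1 h2 h3
    obtain ⟨i, hi⟩ : ∃ i, ¬ WeaklyAvoids G c i (w j) (w k) := by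
      by_contra h
      push_neg at h
      exact hnadj ⟨hne, hreach, h⟩
    unfold WeaklyAvoids at hi
    push_neg at hi
    obtain ⟨hj, hk, hnp⟩ := hi
    have hicu : i = c u := by
      by_contra hiu
      rcases (hadj j).2.2 i with h | h | ⟨p, hp⟩
      · exact hiu h.symm
      · exact hj h
      rcases (hadj k).2.2 i with h | h | ⟨q, hq⟩
      · exact hiu h.symm
      · exact hk h
      obtain ⟨x, hx, hcx⟩ := hnp (p.reverse.append q)
      rw [SimpleGraph.Walk.mem_support_append_iff, SimpleGraph.Walk.support_reverse,
        List.mem_reverse] at hx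
      rcases hx with hx | hx
      · exact hp x hx hcx
      · exact hq x hx hcx
    rw [hicu] at hj hk hnp
    exact ⟨hj, hk, hnp⟩
  -- numeric facts in `ZMod n`
  have h20 : (2 : ZMod n) ≠ 0 := by
    have := zne (show (2:ℕ) < n by omega) (show (0:ℕ) < n by omega) (by omega)
    simpa using this
  have h21 : (2 : ZMod n) ≠ 1 := by
    have := zne (show (2:ℕ) < n by omega) (show (1:ℕ) < n by omega) (by omega)
    simpa using this
  have h30 : (3 : ZMod n) ≠ 0 := by
    have := zne (show (3:ℕ) < n by omega) (show (0:ℕ) < n by omega) (by omega)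
    simpa using this
  have h31 : (3 : ZMod n) ≠ 1 := by
    have := zne (show (3:ℕ) < n by omega) (show (1:ℕ) < n by omega) (by omega)
    simpa using this
  have h32 : (3 : ZMod n) ≠ 2 := by
    have := zne (show (3:ℕ) < n by omega) (show (2:ℕ) < n by omega) (by omega)
    simpa using this
  have h41 : (4 : ZMod n) ≠ 1 := by
    rcases eq_or_lt_of_le hn with h | h
    · subst h; decide
    · have := zne (show (4:ℕ) < n from h) (show (1:ℕ) < n by omega) (by omega)
      simpa using this
  have k02 := key 0 2 h20 (by rw [zero_add]; exact h21) (by rw [show (2 : ZMod n) + 1 = 3 by ring]; exact h30)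
  have k13 := key 1 3 h31 (by rw [one_add_one_eq_two]; exact h32)
    (by rw [show (3 : ZMod n) + 1 = 4 by ring]; exact h41)
  -- c u-avoiding walks along the rim
  have a01 := hcyc 0
  rw [zero_add] at a01
  have a12 := hcyc 1
  rw [one_add_one_eq_two] at a12
  rcases a01.2.2 (c u) with h | h | ⟨q1, hq1⟩
  · exact k02.1 h
  · exact k13.1 h
  rcases a12.2.2 (c u) with h | h | ⟨q2, hq2⟩
  · exact k13.1 h
  · exact k02.2.1 h
  obtain ⟨x, hx, hcx⟩ := k02.2.2 (q1.append q2)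
  rw [SimpleGraph.Walk.mem_support_append_iff] at hx
  rcases hx with hx | hx
  · exact hq1 x hx hcx
  · exact hq2 x hx hcx

/-- The weak color-avoiding connectivity graph `G'` contains no induced wheel on at
least five vertices; equivalently, it is locally chordal. -/
theorem weakGraph_locallyChordal {V C : Type} (G : SimpleGraph V) (c : V → C) :
    LocallyChordal (weakGraph G c) ∧ ¬ HasInducedWheel (weakGraph G c) := by
  constructor
  · rintro u ⟨n, hn, w, hinj, hmem, hcyc, hind⟩
    exact no_wheel_core G c u hn w hinj (fun j => hmem j) hcyc hind
  · rintro ⟨l, hl, u, w, hinj, -, hadj, hcyc, hind⟩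
    exact no_wheel_core G c u hl w hinj hadj hcyc hind
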